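/- For the constrained binary interaction rule v' = v + (νΔt/(ν+Δt²))·I(v,w;ρ) + (Δt²/(ν+Δt²))·(v_d−v), if 0 < Δt ≤ 1, ν > 0, v, w ∈ [0,1], v_d ∈ [0,1], then v' ∈ [0,1]. -/

import Mathlib

noncomputable def P (γ ρ : ℝ) : ℝ := 1 - ρ ^ γ

noncomputable def I (γ Δv ρ v w : ℝ) : ℝ :=
  if v < w then P γ ρ * (min (v + Δv) 1 - v)
  else if w < v then (1 - P γ ρ) * (P γ ρ * w - v)
  else 0

lemma I_bounds (γ Δv ρ v w : ℝ) (hγ : 0 < γ) (hΔv : 0 < Δv)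
    (hρ : ρ ∈ Set.Icc (0:ℝ) 1) (hv : v ∈ Set.Icc (0:ℝ) 1)
    (hw : w ∈ Set.Icc (0:ℝ) 1) :
    -v ≤ I γ Δv ρ v w ∧ I γ Δv ρ v w ≤ 1 - v := by
  obtain ⟨hρ0, hρ1⟩ := hρ
  obtain ⟨hv0, hv1⟩ := hv
  obtain ⟨hw0, hw1⟩ := hw
  have hP0 : 0 ≤ P γ ρ := by
    have : ρ ^ γ ≤ 1 := Real.rpow_le_one hρ0 hρ1 hγ.le
    unfold P; linarith
  have hP1 : P γ ρ ≤ 1 := by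
    have : 0 ≤ ρ ^ γ := Real.rpow_nonneg hρ0 γ
    unfold P; linarith
  unfold I
  split_ifs with h1 h2
  · have hm1 : min (v + Δv) 1 ≤ 1 := min_le_right _ _
    have hm2 : v ≤ min (v + Δv) 1 := le_min (by linarith) hv1
    constructor
    · nlinarith
    · nlinarith
  · have h3 : P γ ρ * w ≤ w := by nlinarith
    have h4 : 0 ≤ P γ ρ * w := mul_nonneg hP0 hw0
    constructor
    · nlinarith
    · nlinarith
  · constructor <;> simp <;> linarith

theorem stmt3 (γ Δv ρ v w vd Δt ν : ℝ) (hγ : 0 < γ) (hΔv : 0 < Δv)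
    (hρ : ρ ∈ Set.Icc (0:ℝ) 1) (hv : v ∈ Set.Icc (0:ℝ) 1)
    (hw : w ∈ Set.Icc (0:ℝ) 1) (hvd : vd ∈ Set.Icc (0:ℝ) 1)
    (hΔt : 0 < Δt) (hΔt1 : Δt ≤ 1) (hν : 0 < ν) :
    v + (ν * Δt / (ν + Δt ^ 2)) * I γ Δv ρ v w + (Δt ^ 2 / (ν + Δt ^ 2)) * (vd - v)
      ∈ Set.Icc (0:ℝ) 1 := by
  obtain ⟨hI1, hI2⟩ := I_bounds γ Δv ρ v w hγ hΔv hρ hv hw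
  obtain ⟨hv0, hv1⟩ := hv
  obtain ⟨hd0, hd1⟩ := hvd
  have hden : 0 < ν + Δt ^ 2 := by positivity
  have ha0 : 0 ≤ ν * Δt / (ν + Δt ^ 2) := by positivity
  have hb0 : 0 ≤ Δt ^ 2 / (ν + Δt ^ 2) := by positivity
  have hab : ν * Δt / (ν + Δt ^ 2) + Δt ^ 2 / (ν + Δt ^ 2) ≤ 1 := by
    rw [← add_div, div_le_one hden]
    nlinarith
  constructor
  · nlinarith [mul_le_mul_of_nonneg_left hI1 ha0,
      mul_le_mul_of_nonneg_left (show -v ≤ vd - v by linarith) hb0]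
  · nlinarith [mul_le_mul_of_nonneg_left hI2 ha0,
      mul_le_mul_of_nonneg_left (show vd - v ≤ 1 - v by linarith) hb0]
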